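/- Let S be a bipotent semifield. Then the following are equivalent: (i) M_n(S) and UT_n(S) are strongly permutable for all n ≥ 2 and U_n(S) is strongly permutable for all n ≥ 3; (ii) S is isomorphic to the two-element Boolean semifield 𝔹. -/

import Mathlib

set_option maxHeartbeats 1000000

universe u

/-! ### Semiring classes.

A *semiring* here is a nonempty set with an associative commutative addition and an
associative multiplication which distributes over addition on both sides; no zero or
identity element is assumed. -/

class PlainSemiring (S : Type u) extends Add S, Mul S where
  nonempty' : Nonempty S
  add_assoc' : ∀ a b c : S, a + b + c = a + (b + c)
  add_comm' : ∀ a b : S, a + b = b + a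
  mul_assoc' : ∀ a b c : S, a * b * c = a * (b * c)
  left_distrib' : ∀ a b c : S, a * (b + c) = a * b + a * c
  right_distrib' : ∀ a b c : S, (a + b) * c = a * c + b * c

/-- A bipotent semiring: `x + y` is always either `x` or `y`.
(The induced total order is given by `x ≤ y ↔ x + y = y`.) -/
class BipotentSemiring (S : Type u) extends PlainSemiring S where
  bipotent : ∀ a b : S, a + b = a ∨ a + b = b

/-- A commutative bipotent semiring. -/
class CommBipotentSemiring (S : Type u) extends BipotentSemiring S where
  mul_comm' : ∀ a b : S, a * b = b * a

/-- `mpow a n` is the `(n+1)`-st power of `a`, so the set of positive powers of `a`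
is exactly `Set.range (mpow a)`, and the multiplicative order of `a` is the
cardinality of `Set.range (mpow a)`. -/
def mpow {S : Type*} [Mul S] (a : S) : ℕ → S
  | 0 => a
  | n + 1 => mpow a n * a

lemma mpow_mul_mpow {S : Type*} [PlainSemiring S] (a : S) (m n : ℕ) :
    mpow a m * mpow a n = mpow a (m + n + 1) := by
  induction n with
  | zero => rfl
  | succ n ih =>
    show mpow a m * (mpow a n * a) = mpow a (m + n + 1) * a
    rw [← PlainSemiring.mul_assoc', ih]

/-! ### Products of finite families, and permutability. -/

/-- Fold step used to define sums/products of possibly empty families in a structure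
with no neutral element; the overall fold is `none` iff the family is empty. -/
def optStep {S : Type*} (op : S → S → S) : Option S → S → Option S :=
  fun acc x => some (acc.elim x (fun a => op a x))

/-- The sum `s 0 + s 1 + ⋯` of a finite family, as an `Option` (`none` iff `k = 0`). -/
def finSum {S : Type*} [Add S] {k : ℕ} (s : Fin k → S) : Option S :=
  (List.ofFn s).foldl (optStep (· + ·)) none

/-- The product `s 0 * s 1 * ⋯` of a finite family, as an `Option` (`none` iff `k = 0`). -/
def finProd {S : Type*} [Mul S] {k : ℕ} (s : Fin k → S) : Option S :=
  (List.ofFn s).foldl (optStep (· * ·)) none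

/-- A multiplicative structure is `k`-permutable if every product of `k` elements is
preserved by some non-identity permutation of its factors. -/
def KPermutable (S : Type*) [Mul S] (k : ℕ) : Prop :=
  ∀ s : Fin k → S, ∃ σ : Equiv.Perm (Fin k), σ ≠ Equiv.refl (Fin k) ∧
    finProd (fun i => s (σ i)) = finProd s

/-- A semigroup is strongly permutable if it is `k`-permutable for some `k ≥ 2`. -/
def StronglyPermutable (S : Type*) [Mul S] : Prop :=
  ∃ k : ℕ, 2 ≤ k ∧ KPermutable S k

/-- A semigroup is weakly permutable if for some `k ≥ 2`, any product of `k` elements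
is computed identically by two distinct permutations of its factors. -/
def WeaklyPermutable (S : Type*) [Mul S] : Prop :=
  ∃ k : ℕ, 2 ≤ k ∧ ∀ s : Fin k → S, ∃ σ τ : Equiv.Perm (Fin k), σ ≠ τ ∧
    finProd (fun i => s (σ i)) = finProd (fun i => s (τ i))

/-- Isomorphism of semirings (bijection preserving addition and multiplication). -/
def RingLikeIso (S T : Type*) [Add S] [Mul S] [Add T] [Mul T] : Prop :=
  ∃ f : S → T, Function.Bijective f ∧ (∀ a b : S, f (a + b) = f a + f b) ∧
    (∀ a b : S, f (a * b) = f a * f b)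

/-! ### Matrices. -/

/-- Square `n × n` matrices over `S`. -/
def MatSR (S : Type u) (n : ℕ) : Type u := Fin n → Fin n → S

/-- Matrix multiplication, `(A*B) i j = Σ_k (A i k * B k j)`.  (For `n ≥ 1` — the only
case of interest — the `getD` default value is never used.) -/
def matMul {S : Type*} [Add S] [Mul S] {n : ℕ} (A B : MatSR S n) : MatSR S n :=
  fun i j => (finSum (fun k : Fin n => A i k * B k j)).getD (A i j * B i j)

/-- The multiplicative semigroup `M_n(S)`. -/
instance {S : Type*} [Add S] [Mul S] {n : ℕ} : Mul (MatSR S n) := ⟨matMul⟩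

/-! ### `S⁰`: adjoining a zero, and upper triangular matrices. -/

/-- `S` with a zero (additively neutral, multiplicatively absorbing) element adjoined. -/
inductive Adj0 (S : Type u) : Type u
  | zero : Adj0 S
  | elem : S → Adj0 S

namespace Adj0

def add' {S : Type*} [Add S] : Adj0 S → Adj0 S → Adj0 S
  | .zero, b => b
  | .elem a, .zero => .elem a
  | .elem a, .elem b => .elem (a + b)

def mul' {S : Type*} [Mul S] : Adj0 S → Adj0 S → Adj0 S
  | .zero, _ => .zero
  | .elem _, .zero => .zero
  | .elem a, .elem b => .elem (a * b)

instance {S : Type*} [Add S] : Add (Adj0 S) := ⟨add'⟩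
instance {S : Type*} [Mul S] : Mul (Adj0 S) := ⟨mul'⟩

@[simp] lemma zero_add {S : Type*} [Add S] (b : Adj0 S) : (zero : Adj0 S) + b = b := rfl
@[simp] lemma add_zero {S : Type*} [Add S] (a : Adj0 S) : a + (zero : Adj0 S) = a := by
  cases a <;> rfl
@[simp] lemma elem_add_elem {S : Type*} [Add S] (a b : S) :
    (elem a : Adj0 S) + elem b = elem (a + b) := rfl
@[simp] lemma zero_mul {S : Type*} [Mul S] (b : Adj0 S) : (zero : Adj0 S) * b = zero := rfl
@[simp] lemma mul_zero {S : Type*} [Mul S] (a : Adj0 S) : a * (zero : Adj0 S) = zero := by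
  cases a <;> rfl
@[simp] lemma elem_mul_elem {S : Type*} [Mul S] (a b : S) :
    (elem a : Adj0 S) * elem b = elem (a * b) := rfl

lemma add_eq_zero_iff {S : Type*} [Add S] (a b : Adj0 S) :
    a + b = zero ↔ a = zero ∧ b = zero := by
  cases a <;> cases b <;> simp

end Adj0

lemma foldl_optStep_adj0 {S : Type*} [Add S] (l : List (Adj0 S)) (a : Adj0 S) :
    ∃ c : Adj0 S, l.foldl (optStep (· + ·)) (some a) = some c ∧
      (c = Adj0.zero ↔ a = Adj0.zero ∧ ∀ x ∈ l, x = Adj0.zero) := by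
  induction l generalizing a with
  | nil => exact ⟨a, rfl, by simp⟩
  | cons x l ih =>
    obtain ⟨c, hc, hiff⟩ := ih (a + x)
    refine ⟨c, ?_, ?_⟩
    · simpa [optStep] using hc
    · rw [hiff, Adj0.add_eq_zero_iff]
      simp only [List.mem_cons, forall_eq_or_imp]
      tauto

lemma finSum_adj0_eq_zero {S : Type*} [Add S] {n : ℕ} (f : Fin n → Adj0 S) (i : Fin n)
    (d : Adj0 S) (h : ∀ k, f k = Adj0.zero) : (finSum f).getD d = Adj0.zero := by
  cases n with
  | zero => exact i.elim0
  | succ m =>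
    rw [finSum, List.ofFn_succ, List.foldl_cons]
    obtain ⟨c, hc, hiff⟩ := foldl_optStep_adj0 (List.ofFn fun i : Fin m => f i.succ) (f 0)
    rw [show optStep (· + ·) none (f 0) = some (f 0) from rfl, hc]
    have : c = Adj0.zero := hiff.mpr ⟨h 0, by
      intro x hx
      rw [List.mem_ofFn] at hx
      obtain ⟨j, rfl⟩ := hx
      exact h _⟩
    simp [this]

lemma finSum_adj0_ne_zero {S : Type*} [Add S] {n : ℕ} (f : Fin n → Adj0 S) (i : Fin n)
    (d : Adj0 S) (h : f i ≠ Adj0.zero) : (finSum f).getD d ≠ Adj0.zero := by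
  cases n with
  | zero => exact i.elim0
  | succ m =>
    rw [finSum, List.ofFn_succ, List.foldl_cons]
    obtain ⟨c, hc, hiff⟩ := foldl_optStep_adj0 (List.ofFn fun i : Fin m => f i.succ) (f 0)
    rw [show optStep (· + ·) none (f 0) = some (f 0) from rfl, hc]
    simp only [Option.getD_some]
    intro hcz
    obtain ⟨h0, hall⟩ := hiff.mp hcz
    induction i using Fin.cases with
    | zero => exact h h0
    | succ j => exact h (hall _ (List.mem_ofFn.mpr ⟨j, rfl⟩))

/-- Upper-triangularity over `S⁰`: entries strictly below the diagonal are the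
adjoined zero; entries on and above the diagonal lie in `S`. -/
def IsUT {S : Type*} {n : ℕ} (A : MatSR (Adj0 S) n) : Prop :=
  (∀ i j : Fin n, (j : ℕ) < (i : ℕ) → A i j = Adj0.zero) ∧
  (∀ i j : Fin n, (i : ℕ) ≤ (j : ℕ) → ∃ s : S, A i j = Adj0.elem s)

lemma IsUT.mul {S : Type*} [Add S] [Mul S] {n : ℕ} {A B : MatSR (Adj0 S) n}
    (hA : IsUT A) (hB : IsUT B) : IsUT (matMul A B) := by
  constructor
  · intro i j hji
    apply finSum_adj0_eq_zero _ i
    intro k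
    rcases le_or_gt (i : ℕ) (k : ℕ) with h | h
    · rw [hB.1 k j (lt_of_lt_of_le hji h), Adj0.mul_zero]
    · rw [hA.1 i k h, Adj0.zero_mul]
  · intro i j hij
    have hne : matMul A B i j ≠ Adj0.zero := by
      apply finSum_adj0_ne_zero _ i
      obtain ⟨s, hs⟩ := hA.2 i i le_rfl
      obtain ⟨t, ht⟩ := hB.2 i j hij
      rw [hs, ht, Adj0.elem_mul_elem]
      simp
    cases hc : matMul A B i j with
    | zero => exact absurd hc hne
    | elem s => exact ⟨s, rfl⟩

/-- The multiplicative semigroup `UT_n(S)` of upper triangular matrices over `S⁰`. -/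
def UTMat (S : Type u) (n : ℕ) : Type u := {A : MatSR (Adj0 S) n // IsUT A}

instance {S : Type*} [Add S] [Mul S] {n : ℕ} : Mul (UTMat S n) :=
  ⟨fun A B => ⟨matMul A.1 B.1, A.2.mul B.2⟩⟩

/-! ### `S^{01}`: adjoining a zero and an identity, and unitriangular matrices. -/

/-- `S` with a zero and a multiplicative identity adjoined (`S^{01}` in the paper).
The sum of `one` and an `elem` is left undefined in the paper; it is given an
arbitrary value here, and never arises in products of unitriangular matrices. -/
inductive Adj01 (S : Type u) : Type u
  | zero : Adj01 S
  | one : Adj01 S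
  | elem : S → Adj01 S

namespace Adj01

def add' {S : Type*} [Add S] : Adj01 S → Adj01 S → Adj01 S
  | .zero, b => b
  | a, .zero => a
  | .one, .one => .one
  | .one, .elem b => .elem b
  | .elem a, .one => .elem a
  | .elem a, .elem b => .elem (a + b)

def mul' {S : Type*} [Mul S] : Adj01 S → Adj01 S → Adj01 S
  | .zero, _ => .zero
  | _, .zero => .zero
  | .one, b => b
  | a, .one => a
  | .elem a, .elem b => .elem (a * b)

instance {S : Type*} [Add S] : Add (Adj01 S) := ⟨add'⟩
instance {S : Type*} [Mul S] : Mul (Adj01 S) := ⟨mul'⟩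

@[simp] lemma zero_add {S : Type*} [Add S] (b : Adj01 S) : (zero : Adj01 S) + b = b := by
  cases b <;> rfl
@[simp] lemma add_zero {S : Type*} [Add S] (a : Adj01 S) : a + (zero : Adj01 S) = a := by
  cases a <;> rfl
@[simp] lemma one_add_one {S : Type*} [Add S] : (one : Adj01 S) + one = one := rfl
@[simp] lemma elem_add_elem {S : Type*} [Add S] (a b : S) :
    (elem a : Adj01 S) + elem b = elem (a + b) := rfl
@[simp] lemma one_add_elem {S : Type*} [Add S] (b : S) :
    (one : Adj01 S) + elem b = elem b := rfl
@[simp] lemma elem_add_one {S : Type*} [Add S] (a : S) :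
    (elem a : Adj01 S) + one = elem a := rfl
@[simp] lemma zero_mul {S : Type*} [Mul S] (b : Adj01 S) : (zero : Adj01 S) * b = zero := by
  cases b <;> rfl
@[simp] lemma mul_zero {S : Type*} [Mul S] (a : Adj01 S) : a * (zero : Adj01 S) = zero := by
  cases a <;> rfl
@[simp] lemma one_mul {S : Type*} [Mul S] (b : Adj01 S) : (one : Adj01 S) * b = b := by
  cases b <;> rfl
@[simp] lemma mul_one {S : Type*} [Mul S] (a : Adj01 S) : a * (one : Adj01 S) = a := by
  cases a <;> rfl
@[simp] lemma elem_mul_elem {S : Type*} [Mul S] (a b : S) :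
    (elem a : Adj01 S) * elem b = elem (a * b) := rfl

lemma mul_ne_one {S : Type*} [Mul S] {a b : Adj01 S} (ha : a ≠ one) (hb : b ≠ one) :
    a * b ≠ one := by
  cases a <;> cases b <;> simp_all

lemma add_ne_one {S : Type*} [Add S] {a b : Adj01 S} (ha : a ≠ one) (hb : b ≠ one) :
    a + b ≠ one := by
  cases a <;> cases b <;> simp_all

lemma add_01 {S : Type*} [Add S] {a b : Adj01 S} (ha : a = zero ∨ a = one)
    (hb : b = zero ∨ b = one) :
    (a + b = zero ∨ a + b = one) ∧ (a + b = one ↔ a = one ∨ b = one) := by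
  rcases ha with rfl | rfl <;> rcases hb with rfl | rfl <;> simp

end Adj01

lemma foldl_optStep_adj01 {S : Type*} [Add S] (l : List (Adj01 S)) (a : Adj01 S)
    (ha : a = Adj01.zero ∨ a = Adj01.one) (hl : ∀ x ∈ l, x = Adj01.zero ∨ x = Adj01.one) :
    ∃ c : Adj01 S, l.foldl (optStep (· + ·)) (some a) = some c ∧
      (c = Adj01.zero ∨ c = Adj01.one) ∧
      (c = Adj01.one ↔ a = Adj01.one ∨ ∃ x ∈ l, x = Adj01.one) := by
  induction l generalizing a with
  | nil => exact ⟨a, rfl, ha, by simp⟩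
  | cons x l ih =>
    have hx := hl x (by simp)
    have key := Adj01.add_01 ha hx
    obtain ⟨c, hc, hc01, hiff⟩ := ih (a + x) key.1 (fun y hy => hl y (by simp [hy]))
    refine ⟨c, by simpa [optStep] using hc, hc01, ?_⟩
    rw [hiff, key.2]
    simp only [List.mem_cons, exists_eq_or_imp]
    tauto

lemma foldl_optStep_adj01_ne_one {S : Type*} [Add S] (l : List (Adj01 S)) (a : Adj01 S)
    (ha : a ≠ Adj01.one) (hl : ∀ x ∈ l, x ≠ Adj01.one) :
    ∃ c : Adj01 S, l.foldl (optStep (· + ·)) (some a) = some c ∧ c ≠ Adj01.one := by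
  induction l generalizing a with
  | nil => exact ⟨a, rfl, ha⟩
  | cons x l ih =>
    have hax : a + x ≠ Adj01.one := Adj01.add_ne_one ha (hl x (by simp))
    obtain ⟨c, hc, hcne⟩ := ih (a + x) hax (fun y hy => hl y (by simp [hy]))
    exact ⟨c, by simpa [optStep] using hc, hcne⟩

lemma finSum_adj01_eq_one {S : Type*} [Add S] {n : ℕ} (f : Fin n → Adj01 S) (i : Fin n)
    (d : Adj01 S) (h01 : ∀ k, f k = Adj01.zero ∨ f k = Adj01.one) (hi : f i = Adj01.one) :
    (finSum f).getD d = Adj01.one := by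
  cases n with
  | zero => exact i.elim0
  | succ m =>
    rw [finSum, List.ofFn_succ, List.foldl_cons]
    obtain ⟨c, hc, _, hiff⟩ := foldl_optStep_adj01 (List.ofFn fun i : Fin m => f i.succ) (f 0)
      (h01 0) (by
        intro x hx
        rw [List.mem_ofFn] at hx
        obtain ⟨j, rfl⟩ := hx
        exact h01 _)
    rw [show optStep (· + ·) none (f 0) = some (f 0) from rfl, hc]
    simp only [Option.getD_some]
    apply hiff.mpr
    induction i using Fin.cases with
    | zero => exact Or.inl hi
    | succ j => exact Or.inr ⟨f j.succ, List.mem_ofFn.mpr ⟨j, rfl⟩, hi⟩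

lemma finSum_adj01_eq_zero {S : Type*} [Add S] {n : ℕ} (f : Fin n → Adj01 S) (i : Fin n)
    (d : Adj01 S) (h : ∀ k, f k = Adj01.zero) : (finSum f).getD d = Adj01.zero := by
  cases n with
  | zero => exact i.elim0
  | succ m =>
    rw [finSum, List.ofFn_succ, List.foldl_cons]
    obtain ⟨c, hc, hc01, hiff⟩ := foldl_optStep_adj01 (List.ofFn fun i : Fin m => f i.succ)
      (f 0) (Or.inl (h 0)) (by
        intro x hx
        rw [List.mem_ofFn] at hx
        obtain ⟨j, rfl⟩ := hx
        exact Or.inl (h _))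
    rw [show optStep (· + ·) none (f 0) = some (f 0) from rfl, hc]
    simp only [Option.getD_some]
    rcases hc01 with h' | h'
    · exact h'
    · exfalso
      rcases hiff.mp h' with h'' | ⟨x, hx, hx1⟩
      · rw [h 0] at h''; cases h''
      · rw [List.mem_ofFn] at hx
        obtain ⟨j, rfl⟩ := hx
        rw [h _] at hx1; cases hx1

lemma finSum_adj01_ne_one {S : Type*} [Add S] {n : ℕ} (f : Fin n → Adj01 S) (i : Fin n)
    (d : Adj01 S) (h : ∀ k, f k ≠ Adj01.one) : (finSum f).getD d ≠ Adj01.one := by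
  cases n with
  | zero => exact i.elim0
  | succ m =>
    rw [finSum, List.ofFn_succ, List.foldl_cons]
    obtain ⟨c, hc, hcne⟩ := foldl_optStep_adj01_ne_one (List.ofFn fun i : Fin m => f i.succ)
      (f 0) (h 0) (by
        intro x hx
        rw [List.mem_ofFn] at hx
        obtain ⟨j, rfl⟩ := hx
        exact h _)
    rw [show optStep (· + ·) none (f 0) = some (f 0) from rfl, hc]
    simpa using hcne

/-- Unitriangularity over `S^{01}`: the adjoined zero strictly below the diagonal, the
adjoined identity on the diagonal, and entries of `S⁰` (i.e. anything except the
adjoined identity) strictly above the diagonal. -/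
def IsU {S : Type*} {n : ℕ} (A : MatSR (Adj01 S) n) : Prop :=
  (∀ i j : Fin n, (j : ℕ) < (i : ℕ) → A i j = Adj01.zero) ∧
  (∀ i : Fin n, A i i = Adj01.one) ∧
  (∀ i j : Fin n, (i : ℕ) < (j : ℕ) → A i j ≠ Adj01.one)

lemma IsU.mul {S : Type*} [Add S] [Mul S] {n : ℕ} {A B : MatSR (Adj01 S) n}
    (hA : IsU A) (hB : IsU B) : IsU (matMul A B) := by
  refine ⟨?_, ?_, ?_⟩
  · intro i j hji
    apply finSum_adj01_eq_zero _ i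
    intro k
    rcases le_or_gt (i : ℕ) (k : ℕ) with h | h
    · rw [hB.1 k j (lt_of_lt_of_le hji h), Adj01.mul_zero]
    · rw [hA.1 i k h, Adj01.zero_mul]
  · intro i
    apply finSum_adj01_eq_one _ i
    · intro k
      rcases lt_trichotomy (k : ℕ) (i : ℕ) with h | h | h
      · rw [hA.1 i k h, Adj01.zero_mul]; exact Or.inl rfl
      · have : k = i := Fin.ext h
        subst this
        rw [hA.2.1 k, hB.2.1 k, Adj01.one_mul]; exact Or.inr rfl
      · rw [hB.1 k i h, Adj01.mul_zero]; exact Or.inl rfl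
    · rw [hA.2.1 i, hB.2.1 i, Adj01.one_mul]
  · intro i j hij
    apply finSum_adj01_ne_one _ i
    intro k
    rcases lt_trichotomy (k : ℕ) (i : ℕ) with h | h | h
    · rw [hA.1 i k h, Adj01.zero_mul]; exact fun h => by cases h
    · have : k = i := Fin.ext h
      subst this
      rw [hA.2.1 k, Adj01.one_mul]
      exact hB.2.2 k j (by omega)
    · rcases lt_trichotomy (k : ℕ) (j : ℕ) with h' | h' | h'
      · exact Adj01.mul_ne_one (hA.2.2 i k h) (hB.2.2 k j h')
      · have : k = j := Fin.ext h'
        subst this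
        rw [hB.2.1 k, Adj01.mul_one]
        exact hA.2.2 i k h
      · rw [hB.1 k j h', Adj01.mul_zero]; exact fun h => by cases h

/-- The multiplicative monoid `U_n(S)` of unitriangular matrices over `S^{01}`. -/
def UMat (S : Type u) (n : ℕ) : Type u := {A : MatSR (Adj01 S) n // IsU A}

instance {S : Type*} [Add S] [Mul S] {n : ℕ} : Mul (UMat S n) :=
  ⟨fun A B => ⟨matMul A.1 B.1, A.2.mul B.2⟩⟩

/-! ### Monogenic subsemirings. -/

/-- The carrier of the monogenic subsemiring `⟨a⟩` generated by `a` is the set of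
positive powers of `a`; in a bipotent semiring it is closed under addition. -/
instance genAdd {S : Type*} [BipotentSemiring S] (a : S) : Add ↥(Set.range (mpow a)) :=
  ⟨fun p q => ⟨p.1 + q.1, by
    rcases BipotentSemiring.bipotent p.1 q.1 with h | h <;> rw [h]
    exacts [p.2, q.2]⟩⟩

instance genMul {S : Type*} [BipotentSemiring S] (a : S) : Mul ↥(Set.range (mpow a)) :=
  ⟨fun p q => ⟨p.1 * q.1, by
    obtain ⟨m, hm⟩ := p.2
    obtain ⟨n, hn⟩ := q.2
    exact ⟨m + n + 1, by rw [← hm, ← hn, mpow_mul_mpow]⟩⟩⟩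

/-! ### Concrete bipotent semirings. -/

/-- The tropical semiring `ℕ_max` of positive natural numbers: addition is `max`,
multiplication is ordinary addition. -/
def NMax : Type := {n : ℕ // 0 < n}

instance : Add NMax := ⟨fun a b => ⟨max a.1 b.1, by have := a.2; have := b.2; omega⟩⟩
instance : Mul NMax := ⟨fun a b => ⟨a.1 + b.1, by have := a.2; have := b.2; omega⟩⟩

/-- The tropical semiring `(-ℕ)_max` of negative integers: addition is `max`,
multiplication is ordinary addition. -/
def NegNMax : Type := {z : ℤ // z < 0}

instance : Add NegNMax := ⟨fun a b => ⟨max a.1 b.1, by have := a.2; have := b.2; omega⟩⟩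
instance : Mul NegNMax := ⟨fun a b => ⟨a.1 + b.1, by have := a.2; have := b.2; omega⟩⟩

/-- The truncated tropical semiring `[k]_max` on `{1,…,k}`: addition is `max`,
multiplication is `a·b = min (a+b) k`. -/
def KMax (k : ℕ) : Type := {n : ℕ // 0 < n ∧ n ≤ k}

instance {k : ℕ} : Add (KMax k) :=
  ⟨fun a b => ⟨max a.1 b.1, by have := a.2; have := b.2; omega⟩⟩
instance {k : ℕ} : Mul (KMax k) :=
  ⟨fun a b => ⟨min (a.1 + b.1) k, by have := a.2; have := b.2; omega⟩⟩

/-- The truncated tropical semiring `[-k]_max` on `{-k,…,-1}`: addition is `max`,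
multiplication is `a·b = max (a+b) (-k)`. -/
def NegKMax (k : ℕ) : Type := {z : ℤ // -(k : ℤ) ≤ z ∧ z ≤ -1}

instance {k : ℕ} : Add (NegKMax k) :=
  ⟨fun a b => ⟨max a.1 b.1, by have := a.2; have := b.2; omega⟩⟩
instance {k : ℕ} : Mul (NegKMax k) :=
  ⟨fun a b => ⟨max (a.1 + b.1) (-(k : ℤ)), by have := a.2; have := b.2; omega⟩⟩

/-- The two-element boolean semifield `𝔹`: `{0,1}` with `0 < 1`, addition `max` (= "or")
and the usual multiplication (= "and"). -/
def BoolSR : Type := Bool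

instance : Add BoolSR := ⟨fun a b => (Bool.or a b : Bool)⟩
instance : Mul BoolSR := ⟨fun a b => (Bool.and a b : Bool)⟩

/-- A chain semiring: a linearly ordered set with addition `max` and multiplication `min`. -/
def ChainSR (L : Type u) [LinearOrder L] : Type u := L

instance {L : Type u} [LinearOrder L] : Add (ChainSR L) := ⟨fun a b => (max a b : L)⟩
instance {L : Type u} [LinearOrder L] : Mul (ChainSR L) := ⟨fun a b => (min a b : L)⟩

/-- The three-element commutative bipotent semiring of Proposition 1: order `A < B < C`
(addition is `max`), every element multiplicatively idempotent, and all products of two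
distinct elements equal to `B`. -/
inductive Three : Type
  | A : Three
  | B : Three
  | C : Three
deriving DecidableEq

instance : Fintype Three := ⟨{Three.A, Three.B, Three.C}, fun x => by cases x <;> simp⟩

def Three.add' : Three → Three → Three
  | .A, y => y
  | x, .A => x
  | .B, y => y
  | x, .B => x
  | .C, .C => .C

def Three.mul' : Three → Three → Three
  | .A, .A => .A
  | .B, .B => .B
  | .C, .C => .C
  | _, _ => .B

instance : Add Three := ⟨Three.add'⟩
instance : Mul Three := ⟨Three.mul'⟩

instance : CommBipotentSemiring Three where
  nonempty' := ⟨Three.A⟩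
  add_assoc' := by decide
  add_comm' := by decide
  mul_assoc' := by decide
  left_distrib' := by decide
  right_distrib' := by decide
  bipotent := by decide
  mul_comm' := by decide

/-- A bundled (possibly zero-less and identity-less) semiring, used to quantify over
semirings inside hypotheses. -/
structure BundledSemiring : Type 1 where
  carrier : Type
  add : carrier → carrier → carrier
  mul : carrier → carrier → carrier
  nonempty' : Nonempty carrier
  add_assoc' : ∀ a b c, add (add a b) c = add a (add b c)
  add_comm' : ∀ a b, add a b = add b a
  mul_assoc' : ∀ a b c, mul (mul a b) c = mul a (mul b c)
  left_distrib' : ∀ a b c, mul a (add b c) = add (mul a b) (mul a c)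
  right_distrib' : ∀ a b c, mul (add a b) c = add (mul a c) (mul b c)

/-! ### Semifields. -/

/-- `z` is a zero element: additively neutral and multiplicatively absorbing. -/
def IsZeroElem {S : Type*} [Add S] [Mul S] (z : S) : Prop :=
  ∀ x : S, z + x = x ∧ x + z = x ∧ z * x = z ∧ x * z = z

/-- `S` is a semifield: a commutative semiring, possibly without zero, whose set of
non-zero elements forms a group under multiplication (with identity `e`). -/
def IsSemifield (S : Type*) [Add S] [Mul S] : Prop :=
  ∃ e : S, ¬ IsZeroElem e ∧
    (∀ x : S, ¬ IsZeroElem x → e * x = x ∧ x * e = x) ∧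
    (∀ x y : S, ¬ IsZeroElem x → ¬ IsZeroElem y → ¬ IsZeroElem (x * y)) ∧
    (∀ x : S, ¬ IsZeroElem x → ∃ y : S, ¬ IsZeroElem y ∧ x * y = e ∧ y * x = e)

/-! ### Truncated tropical semirings. -/

/-- The underlying set `[x,y] ∪ {0}` of the truncated tropical semiring `𝕋_{[x,y]}`
(without the zero element `-∞`), for `0 ≤ x`.  Addition is `max`; multiplication is
`y`-truncated addition `a ⊗ b = min (a+b) y`, with the element `0` acting as the
multiplicative identity. -/
def TTb (x y : ℝ) (_hx : 0 ≤ x) : Type := {r : ℝ // r = 0 ∨ (x ≤ r ∧ r ≤ y)}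

namespace TTb

protected def add {x y : ℝ} {hx : 0 ≤ x} (a b : TTb x y hx) : TTb x y hx :=
  ⟨max a.1 b.1, by rcases max_choice a.1 b.1 with h | h <;> rw [h]
                   exacts [a.2, b.2]⟩

protected noncomputable def mul {x y : ℝ} {hx : 0 ≤ x} (a b : TTb x y hx) : TTb x y hx :=
  if ha : a.1 = 0 then b else if hb : b.1 = 0 then a else
    ⟨min (a.1 + b.1) y, by
      rcases a.2 with h | h
      · exact absurd h ha
      rcases b.2 with h' | h'
      · exact absurd h' hb
      right
      exact ⟨le_min (by linarith [h.1, h'.1]) (by linarith [h.1, h.2]), min_le_right _ _⟩⟩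

instance {x y : ℝ} {hx : 0 ≤ x} : Add (TTb x y hx) := ⟨TTb.add⟩
noncomputable instance {x y : ℝ} {hx : 0 ≤ x} : Mul (TTb x y hx) := ⟨TTb.mul⟩

end TTb

/-- The truncated tropical semiring `𝕋_{[x,y]}` (for `0 ≤ x < y`): the real interval
`[x,y]` together with a multiplicative identity `0` and a zero `-∞`, with addition
`max` and multiplication the `y`-truncated addition `a ⊗ b = min (a+b) y`. -/
abbrev TT (x y : ℝ) (hx : 0 ≤ x) : Type := Adj0 (TTb x y hx)

/-- The multiplicative identity `0` of `𝕋_{[x,y]}`. -/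
noncomputable def ttId (x y : ℝ) (hx : 0 ≤ x) : TT x y hx := Adj0.elem ⟨0, Or.inl rfl⟩

lemma ttId_mul {x y : ℝ} {hx : 0 ≤ x} (b : TT x y hx) : ttId x y hx * b = b := by
  cases b with
  | zero => rfl
  | elem e =>
    show Adj0.elem (TTb.mul ⟨0, Or.inl rfl⟩ e) = Adj0.elem e
    first
      | exact congrArg Adj0.elem (dif_pos rfl)
      | (unfold TTb.mul; simp)
      | simp [TTb.mul]

/-- The subsemigroup `S` of `M_2(𝕋_{[1,z]})` of matrices of the form `[[0,a],[-∞,b]]`. -/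
noncomputable def UpperS (z : ℝ) (hz : (0:ℝ) ≤ 1) : Type :=
  {A : MatSR (TT 1 z hz) 2 // A 0 0 = ttId 1 z hz ∧ A 1 0 = Adj0.zero}

/-- The subsemigroup `S'` of `M_2(𝕋_{[1,z]})` of matrices of the form `[[0,-∞],[a,b]]`. -/
noncomputable def LowerS (z : ℝ) (hz : (0:ℝ) ≤ 1) : Type :=
  {A : MatSR (TT 1 z hz) 2 // A 0 0 = ttId 1 z hz ∧ A 0 1 = Adj0.zero}

noncomputable instance {z : ℝ} {hz : (0:ℝ) ≤ 1} : Mul (UpperS z hz) :=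
  ⟨fun A B => ⟨A.1 * B.1, by
    obtain ⟨hA1, hA2⟩ := A.2
    obtain ⟨hB1, hB2⟩ := B.2
    constructor
    · show A.1 0 0 * B.1 0 0 + A.1 0 1 * B.1 1 0 = ttId 1 z hz
      rw [hA1, hB1, hB2, ttId_mul, Adj0.mul_zero, Adj0.add_zero]
    · show A.1 1 0 * B.1 0 0 + A.1 1 1 * B.1 1 0 = Adj0.zero
      rw [hA2, hB2, Adj0.zero_mul, Adj0.mul_zero, Adj0.add_zero]⟩⟩

noncomputable instance {z : ℝ} {hz : (0:ℝ) ≤ 1} : Mul (LowerS z hz) :=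
  ⟨fun A B => ⟨A.1 * B.1, by
    obtain ⟨hA1, hA2⟩ := A.2
    obtain ⟨hB1, hB2⟩ := B.2
    constructor
    · show A.1 0 0 * B.1 0 0 + A.1 0 1 * B.1 1 0 = ttId 1 z hz
      rw [hA1, hB1, hA2, ttId_mul, Adj0.zero_mul, Adj0.add_zero]
    · show A.1 0 0 * B.1 0 1 + A.1 0 1 * B.1 1 1 = Adj0.zero
      rw [hA1, hB2, hA2, ttId_mul, Adj0.zero_mul, Adj0.add_zero]⟩⟩

/-! ### Auxiliary material for the proof of Statement 11. -/

lemma foldl_optStep_some {T : Type*} (op : T → T → T) (l : List T) (a : T) :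
    l.foldl (optStep op) (some a) = some (l.foldl op a) := by
  induction l generalizing a with
  | nil => rfl
  | cons x l ih => exact ih (op a x)

lemma finProd_succ {T : Type*} [Mul T] {m : ℕ} (s : Fin (m+1) → T) :
    finProd s = some ((List.ofFn fun i : Fin m => s i.succ).foldl (· * ·) (s 0)) := by
  rw [finProd, List.ofFn_succ, List.foldl_cons]
  exact foldl_optStep_some _ _ _

lemma stronglyPermutable_of_finite (T : Type*) [Mul T] [Finite T] :
    StronglyPermutable T := by
  cases nonempty_fintype T
  refine ⟨Fintype.card T + 2, by omega, fun s => ?_⟩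
  obtain ⟨i, j, hne, hij⟩ := Fintype.exists_ne_map_eq_of_card_lt s
    (by simp [Fintype.card_fin])
  refine ⟨Equiv.swap i j, ?_, ?_⟩
  · intro h
    exact hne (Equiv.swap_eq_refl_iff.mp h)
  · congr 1
    funext x
    rcases eq_or_ne x i with rfl | hxi
    · simp only [Equiv.swap_apply_left]; exact hij.symm
    rcases eq_or_ne x j with rfl | hxj
    · simp only [Equiv.swap_apply_right]; exact hij
    · rw [Equiv.swap_apply_of_ne_of_ne hxi hxj]

def adj0Equiv (S : Type u) : Adj0 S ≃ Option S where
  toFun := fun a => match a with | .zero => none | .elem s => some s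
  invFun := fun o => match o with | none => .zero | some s => .elem s
  left_inv := by rintro (_ | s) <;> rfl
  right_inv := by rintro (_ | s) <;> rfl

def adj01Equiv (S : Type u) : Adj01 S ≃ Option (Option S) where
  toFun := fun a => match a with
    | .zero => none | .one => some none | .elem s => some (some s)
  invFun := fun o => match o with
    | none => .zero | some none => .one | some (some s) => .elem s
  left_inv := by rintro (_ | _ | s) <;> rfl
  right_inv := by rintro (_ | (_ | s)) <;> rfl

section BipAux

variable {S : Type u} [CommBipotentSemiring S]

lemma s_add_assoc (a b c : S) : a + b + c = a + (b + c) := PlainSemiring.add_assoc' a b c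
lemma s_add_comm (a b : S) : a + b = b + a := PlainSemiring.add_comm' a b
lemma s_mul_assoc (a b c : S) : a * b * c = a * (b * c) := PlainSemiring.mul_assoc' a b c
lemma s_mul_comm (a b : S) : a * b = b * a := CommBipotentSemiring.mul_comm' a b
lemma s_ldist (a b c : S) : a * (b + c) = a * b + a * c := PlainSemiring.left_distrib' a b c
lemma s_add_idem (a : S) : a + a = a := by
  rcases BipotentSemiring.bipotent a a with h | h <;> exact h

/-- The order relation of a bipotent semiring. -/
def sle (x y : S) : Prop := x + y = y

lemma sle_refl (x : S) : sle x x := s_add_idem x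

lemma sle_trans {x y z : S} (h1 : sle x y) (h2 : sle y z) : sle x z := by
  unfold sle at *
  rw [← h2, ← s_add_assoc, h1]

lemma sle_antisymm {x y : S} (h1 : sle x y) (h2 : sle y x) : x = y := by
  calc x = y + x := h2.symm
  _ = x + y := s_add_comm y x
  _ = y := h1

lemma sle_mul_left {x y : S} (h : sle x y) (z : S) : sle (z * x) (z * y) := by
  unfold sle at *
  rw [← s_ldist, h]

lemma sle_mul_right {x y : S} (h : sle x y) (z : S) : sle (x * z) (y * z) := by
  rw [s_mul_comm x z, s_mul_comm y z]; exact sle_mul_left h z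

lemma sle_mul {x y u v : S} (h1 : sle x y) (h2 : sle u v) : sle (x * u) (y * v) :=
  sle_trans (sle_mul_right h1 u) (sle_mul_left h2 y)

end BipAux

section PowAux

variable {S : Type u} [CommBipotentSemiring S]

lemma mpow_not_zero (a : S)
    (hcl : ∀ x y : S, ¬ IsZeroElem x → ¬ IsZeroElem y → ¬ IsZeroElem (x * y))
    (haZ : ¬ IsZeroElem a) : ∀ n : ℕ, ¬ IsZeroElem (mpow a n) := by
  intro n
  induction n with
  | zero => exact haZ
  | succ n ih => exact hcl _ _ ih haZ

lemma sle_e_mpow (e a : S) (heZ : ¬ IsZeroElem e)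
    (hid : ∀ x : S, ¬ IsZeroElem x → e * x = x ∧ x * e = x)
    (hea : sle e a) : ∀ n : ℕ, sle e (mpow a n) := by
  intro n
  induction n with
  | zero => exact hea
  | succ n ih =>
    have h : sle (e * e) (mpow a n * a) := sle_mul ih hea
    rwa [(hid e heZ).1] at h

lemma sle_a_mpow (e a : S) (heZ : ¬ IsZeroElem e)
    (hid : ∀ x : S, ¬ IsZeroElem x → e * x = x ∧ x * e = x)
    (haZ : ¬ IsZeroElem a) (hea : sle e a) : ∀ n : ℕ, sle a (mpow a n) := by
  intro n
  induction n with
  | zero => exact sle_refl a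
  | succ n ih =>
    have h : sle (e * a) (mpow a n * a) :=
      sle_mul (sle_e_mpow e a heZ hid hea n) (sle_refl a)
    rwa [(hid a haZ).1] at h

lemma sle_mpow_mono (e a : S) (heZ : ¬ IsZeroElem e)
    (hid : ∀ x : S, ¬ IsZeroElem x → e * x = x ∧ x * e = x)
    (hcl : ∀ x y : S, ¬ IsZeroElem x → ¬ IsZeroElem y → ¬ IsZeroElem (x * y))
    (haZ : ¬ IsZeroElem a) (hea : sle e a)
    {m n : ℕ} (h : m ≤ n) : sle (mpow a m) (mpow a n) := by
  rcases eq_or_lt_of_le h with rfl | hlt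
  · exact sle_refl _
  · have hn : mpow a n = mpow a m * mpow a (n - m - 1) := by
      rw [mpow_mul_mpow]; congr 1; omega
    have h2 : sle (mpow a m * e) (mpow a m * mpow a (n - m - 1)) :=
      sle_mul_left (sle_e_mpow e a heZ hid hea _) _
    rw [(hid _ (mpow_not_zero a hcl haZ m)).2] at h2
    rwa [hn]

lemma mpow_max (e a : S) (heZ : ¬ IsZeroElem e)
    (hid : ∀ x : S, ¬ IsZeroElem x → e * x = x ∧ x * e = x)
    (hcl : ∀ x y : S, ¬ IsZeroElem x → ¬ IsZeroElem y → ¬ IsZeroElem (x * y))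
    (haZ : ¬ IsZeroElem a) (hea : sle e a)
    (m n : ℕ) : mpow a m + mpow a n = mpow a (max m n) := by
  rcases le_total m n with h | h
  · rw [max_eq_right h]
    exact sle_mpow_mono e a heZ hid hcl haZ hea h
  · rw [max_eq_left h, s_add_comm]
    exact sle_mpow_mono e a heZ hid hcl haZ hea h

lemma mpow_inj (e a : S) (heZ : ¬ IsZeroElem e)
    (hid : ∀ x : S, ¬ IsZeroElem x → e * x = x ∧ x * e = x)
    (hcl : ∀ x y : S, ¬ IsZeroElem x → ¬ IsZeroElem y → ¬ IsZeroElem (x * y))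
    (hinv : ∀ x : S, ¬ IsZeroElem x → ∃ y : S, ¬ IsZeroElem y ∧ x * y = e ∧ y * x = e)
    (haZ : ¬ IsZeroElem a) (hea : sle e a) (hane : a ≠ e)
    {m n : ℕ} (h : mpow a m = mpow a n) : m = n := by
  by_contra hne
  wlog hmn : m < n generalizing m n
  · exact this h.symm (Ne.symm hne) (by omega)
  have hn : mpow a n = mpow a m * mpow a (n - m - 1) := by
    rw [mpow_mul_mpow]; congr 1; omega
  obtain ⟨u, huZ, hu1, hu2⟩ := hinv (mpow a m) (mpow_not_zero a hcl haZ m)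
  have key : mpow a (n - m - 1) = e := by
    have h1 : u * mpow a m = u * (mpow a m * mpow a (n - m - 1)) := by
      rw [← hn, ← h]
    rw [hu2, ← s_mul_assoc, hu2, (hid _ (mpow_not_zero a hcl haZ _)).1] at h1
    exact h1.symm
  have h2 : sle a e := key ▸ sle_a_mpow e a heZ hid haZ hea (n - m - 1)
  exact hane (sle_antisymm h2 hea)

end PowAux

/-! ### Exponent matrices over ℕ (the tropical shadow of `M₂(S)`). -/

/-- 2×2 matrices of exponents. -/
abbrev ZMat2 : Type := Fin 2 → Fin 2 → ℕ

/-- Exponent-level multiplication: each `mpow a x * mpow a y = mpow a (x+y+1)` and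
sums become maxima, so the product picks up an extra `+1`. -/
def zmul2 (A B : ZMat2) : ZMat2 :=
  fun i j => max (A i 0 + B 0 j) (A i 1 + B 1 j) + 1

/-- Realize an exponent matrix in `M₂(S)` via powers of `a`. -/
def emap {S : Type u} [Mul S] (a : S) (Z : ZMat2) : MatSR S 2 :=
  fun i j => mpow a (Z i j)

lemma finSum_two {T : Type*} [Add T] (f : Fin 2 → T) : finSum f = some (f 0 + f 1) := by
  rw [finSum, List.ofFn_succ, List.ofFn_succ, List.ofFn_zero]
  rfl

section EmapAux

variable {S : Type u} [CommBipotentSemiring S]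

lemma emap_mul (e a : S) (heZ : ¬ IsZeroElem e)
    (hid : ∀ x : S, ¬ IsZeroElem x → e * x = x ∧ x * e = x)
    (hcl : ∀ x y : S, ¬ IsZeroElem x → ¬ IsZeroElem y → ¬ IsZeroElem (x * y))
    (haZ : ¬ IsZeroElem a) (hea : sle e a)
    (A B : ZMat2) : emap a A * emap a B = emap a (zmul2 A B) := by
  funext i j
  show matMul (emap a A) (emap a B) i j = emap a (zmul2 A B) i j
  rw [matMul, finSum_two, Option.getD_some]
  show mpow a (A i 0) * mpow a (B 0 j) + mpow a (A i 1) * mpow a (B 1 j) = _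
  rw [mpow_mul_mpow, mpow_mul_mpow, mpow_max e a heZ hid hcl haZ hea]
  show mpow a _ = mpow a (max (A i 0 + B 0 j) (A i 1 + B 1 j) + 1)
  congr 1
  omega

lemma foldl_emap (e a : S) (heZ : ¬ IsZeroElem e)
    (hid : ∀ x : S, ¬ IsZeroElem x → e * x = x ∧ x * e = x)
    (hcl : ∀ x y : S, ¬ IsZeroElem x → ¬ IsZeroElem y → ¬ IsZeroElem (x * y))
    (haZ : ¬ IsZeroElem a) (hea : sle e a)
    (zl : List ZMat2) : ∀ z0 : ZMat2,
    (zl.map (emap a)).foldl (· * ·) (emap a z0) = emap a (zl.foldl zmul2 z0) := by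
  induction zl with
  | nil => intro z0; rfl
  | cons z zl ih =>
    intro z0
    rw [List.map_cons, List.foldl_cons, List.foldl_cons,
      emap_mul e a heZ hid hcl haZ hea]
    exact ih _

end EmapAux

/-- The exponent matrix `[[C, C+2v],[C-2v-1, C]]` with `C = 2k+2`. -/
def Zv (k v : ℕ) : ZMat2 :=
  fun i j => if i.1 = 0 then (if j.1 = 0 then 2*k+2 else 2*k+2+2*v)
             else (if j.1 = 0 then 2*k+1 - 2*v else 2*k+2)

@[simp] lemma Zv00 (k v : ℕ) : Zv k v 0 0 = 2*k+2 := rfl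
@[simp] lemma Zv01 (k v : ℕ) : Zv k v 0 1 = 2*k+2+2*v := rfl
@[simp] lemma Zv10 (k v : ℕ) : Zv k v 1 0 = 2*k+1 - 2*v := rfl
@[simp] lemma Zv11 (k v : ℕ) : Zv k v 1 1 = 2*k+2 := rfl

lemma zmul2_entry (A B : ZMat2) (i j : Fin 2) :
    zmul2 A B i j = max (A i 0 + B 0 j) (A i 1 + B 1 j) + 1 := rfl

/-- Upper bounds on the entries of the product `Zv k 1 * Zv k 2 * ⋯ * Zv k (m+1)`
(the identity-ordered product). -/
lemma zfold_upper (k : ℕ) : ∀ m : ℕ, m + 1 ≤ k →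
    (((List.ofFn fun i : Fin m => Zv k (i.1 + 2)).foldl zmul2 (Zv k 1)) 0 0 + 1
        ≤ (m+1)*(2*k+3) ∧
     ((List.ofFn fun i : Fin m => Zv k (i.1 + 2)).foldl zmul2 (Zv k 1)) 0 1 + 1
        ≤ (m+1)*(2*k+3) + 2*(m+1) ∧
     ((List.ofFn fun i : Fin m => Zv k (i.1 + 2)).foldl zmul2 (Zv k 1)) 1 0 + 4
        ≤ (m+1)*(2*k+3) ∧
     ((List.ofFn fun i : Fin m => Zv k (i.1 + 2)).foldl zmul2 (Zv k 1)) 1 1 + 1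
        ≤ (m+1)*(2*k+3) + 2*(m+1)) := by
  intro m
  induction m with
  | zero =>
    intro hk
    simp only [List.ofFn_zero, List.foldl_nil, Zv00, Zv01, Zv10, Zv11]
    omega
  | succ m ih =>
    intro hk
    have hofn : (List.ofFn fun i : Fin (m+1) => Zv k (i.1 + 2))
        = (List.ofFn fun i : Fin m => Zv k (i.1 + 2)).concat (Zv k (m + 2)) := by
      rw [List.ofFn_succ']
      rfl
    rw [hofn, List.concat_eq_append, List.foldl_append, List.foldl_cons, List.foldl_nil]
    set P := (List.ofFn fun i : Fin m => Zv k (i.1 + 2)).foldl zmul2 (Zv k 1) with hP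
    obtain ⟨h1, h2, h3, h4⟩ := ih (by omega)
    have e1 : zmul2 P (Zv k (m+2)) 0 0
        = max (P 0 0 + (2*k+2)) (P 0 1 + (2*k+1 - 2*(m+2))) + 1 := rfl
    have e2 : zmul2 P (Zv k (m+2)) 0 1
        = max (P 0 0 + (2*k+2+2*(m+2))) (P 0 1 + (2*k+2)) + 1 := rfl
    have e3 : zmul2 P (Zv k (m+2)) 1 0
        = max (P 1 0 + (2*k+2)) (P 1 1 + (2*k+1 - 2*(m+2))) + 1 := rfl
    have e4 : zmul2 P (Zv k (m+2)) 1 1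
        = max (P 1 0 + (2*k+2+2*(m+2))) (P 1 1 + (2*k+2)) + 1 := rfl
    have hexp : (m+1+1)*(2*k+3) = (m+1)*(2*k+3) + (2*k+3) := by ring
    rw [e1, e2, e3, e4, hexp]
    generalize (m+1)*(2*k+3) = X at *
    omega

/-- Lower bounds on the entries of a product of `Zv`-matrices whose value sequence
has an inversion at positions `sv < tv`. -/
lemma zfold_lower (k : ℕ) (W : ℕ → ℕ)
    (hWk : ∀ n, n < k → W n ≤ k)
    (sv tv : ℕ) (hst : sv < tv) (htk : tv < k) :
    ∀ m : ℕ, m + 1 ≤ k →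
    (((m+1 ≤ sv) → ((List.ofFn fun i : Fin m => Zv k (W (i.1+1))).foldl zmul2 (Zv k (W 0))) 0 0 + 1
        ≥ (m+1)*(2*k+3)) ∧
     ((sv < m+1) → (m+1 ≤ tv) →
        ((List.ofFn fun i : Fin m => Zv k (W (i.1+1))).foldl zmul2 (Zv k (W 0))) 0 1 + 1
        ≥ (m+1)*(2*k+3) + 2*(W sv)) ∧
     ((tv < m+1) →
        ((List.ofFn fun i : Fin m => Zv k (W (i.1+1))).foldl zmul2 (Zv k (W 0))) 0 0 + 2*(W tv) + 2
        ≥ (m+1)*(2*k+3) + 2*(W sv))) := by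
  intro m
  induction m with
  | zero =>
    intro hk
    simp only [List.ofFn_zero, List.foldl_nil, Zv00, Zv01]
    refine ⟨fun _ => by omega, fun h1 h2 => ?_, fun h => by omega⟩
    have hsv : sv = 0 := by omega
    rw [hsv]
    omega
  | succ m ih =>
    intro hk
    have hofn : (List.ofFn fun i : Fin (m+1) => Zv k (W (i.1+1)))
        = (List.ofFn fun i : Fin m => Zv k (W (i.1+1))).concat (Zv k (W (m+1))) := by
      rw [List.ofFn_succ']
      rfl
    rw [hofn, List.concat_eq_append, List.foldl_append, List.foldl_cons, List.foldl_nil]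
    set P := (List.ofFn fun i : Fin m => Zv k (W (i.1+1))).foldl zmul2 (Zv k (W 0)) with hP
    obtain ⟨h1, h2, h3⟩ := ih (by omega)
    have e1 : zmul2 P (Zv k (W (m+1))) 0 0
        = max (P 0 0 + (2*k+2)) (P 0 1 + (2*k+1 - 2*(W (m+1)))) + 1 := rfl
    have e2 : zmul2 P (Zv k (W (m+1))) 0 1
        = max (P 0 0 + (2*k+2+2*(W (m+1)))) (P 0 1 + (2*k+2)) + 1 := rfl
    rw [e1, e2]
    have hexp : (m+1+1)*(2*k+3) = (m+1)*(2*k+3) + (2*k+3) := by ring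
    rw [hexp]
    have hWm : W (m+1) ≤ k := hWk (m+1) (by omega)
    refine ⟨fun hA => ?_, fun hB1 hB2 => ?_, fun hC => ?_⟩
    · have := h1 (by omega)
      omega
    · -- either we were already past sv, or we jump right now (m+1 = sv+1, i.e. sv = m+... )
      rcases Nat.lt_or_ge sv (m+1) with hsv | hsv
      · -- phase 2 continues: was in phase 2 at m+1
        have := h2 hsv (by omega)
        omega
      · -- sv = m+1 : jump applied now, with value W (m+1) = W sv
        have hsveq : sv = m+1 := by omega
        have := h1 (by omega)
        have hWsv : W sv = W (m+1) := by rw [hsveq]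
        rw [hWsv]
        omega
    · rcases Nat.lt_or_ge tv (m+1) with htv | htv
      · -- phase 3 continues
        have := h3 htv
        omega
      · -- tv = m+1 : return applied now
        have htveq : tv = m+1 := by omega
        have := h2 (by omega) (by omega)
        have hWtv : W tv = W (m+1) := by rw [htveq]
        rw [hWtv]
        omega

/-- A non-identity permutation of `Fin (k+1)` has an inversion. -/
lemma exists_inversion {k : ℕ} (σ : Equiv.Perm (Fin (k+1)))
    (h : σ ≠ Equiv.refl (Fin (k+1))) : ∃ s t : Fin (k+1), s < t ∧ σ t < σ s := by
  by_contra hcon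
  push_neg at hcon
  have hmono : StrictMono σ := by
    intro s t hst
    exact lt_of_le_of_ne (hcon s t hst) (fun hh => (ne_of_lt hst) (σ.injective hh))
  have hle : ∀ i : Fin (k+1), (i : ℕ) ≤ (σ i : ℕ) := by
    intro i
    induction i using Fin.induction with
    | zero => exact Nat.zero_le _
    | succ i ihi =>
      have h1 : σ i.castSucc < σ i.succ := hmono (Fin.castSucc_lt_succ (i := i))
      have h2 : (i.castSucc : ℕ) = (i : ℕ) := rfl
      have h3 : (i.succ : ℕ) = (i : ℕ) + 1 := rfl
      rw [Fin.lt_def] at h1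
      omega
  have hsum : ∑ i : Fin (k+1), ((σ i : ℕ)) = ∑ i : Fin (k+1), (i : ℕ) :=
    Equiv.sum_comp σ (fun i => (i : ℕ))
  have hall : ∀ i : Fin (k+1), (i : ℕ) = (σ i : ℕ) := by
    have := (Finset.sum_eq_sum_iff_of_le (fun i _ => hle i)).mp hsum.symm
    intro i
    exact this i (Finset.mem_univ i)
  apply h
  apply Equiv.ext
  intro i
  exact Fin.ext (hall i).symm

@[simp] lemma boolSR_add (a b : BoolSR) : a + b = Bool.or a b := rfl
@[simp] lemma boolSR_mul (a b : BoolSR) : a * b = Bool.and a b := rfl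

/-- If a bipotent semifield contains a non-zero element strictly above the identity,
then `M₂(S)` is not `k`-permutable for any `k ≥ 2`. -/
lemma matsr2_not_kperm {S : Type u} [CommBipotentSemiring S]
    (e a : S) (heZ : ¬ IsZeroElem e)
    (hid : ∀ x : S, ¬ IsZeroElem x → e * x = x ∧ x * e = x)
    (hcl : ∀ x y : S, ¬ IsZeroElem x → ¬ IsZeroElem y → ¬ IsZeroElem (x * y))
    (hinv : ∀ x : S, ¬ IsZeroElem x → ∃ y : S, ¬ IsZeroElem y ∧ x * y = e ∧ y * x = e)
    (haZ : ¬ IsZeroElem a) (hea : sle e a) (hane : a ≠ e)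
    (k : ℕ) (hk : 2 ≤ k) : ¬ KPermutable (MatSR S 2) k := by
  intro hKP
  obtain ⟨k', rfl⟩ : ∃ k', k = k' + 1 := ⟨k - 1, by omega⟩
  classical
  set s : Fin (k'+1) → MatSR S 2 := fun i => emap a (Zv (k'+1) (i.1 + 1)) with hs
  obtain ⟨σ, hσ, heq⟩ := hKP s
  obtain ⟨st, tt, hlt, hinvr⟩ := exists_inversion σ hσ
  set W : ℕ → ℕ := fun n => if h : n < k'+1 then (σ ⟨n, h⟩).1 + 1 else 1 with hW
  have hWi : ∀ i : Fin (k'+1), W i.1 = (σ i).1 + 1 := by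
    intro i
    simp only [hW]
    rw [dif_pos i.isLt]
  -- the identity-ordered product
  have hid0 : s 0 = emap a (Zv (k'+1) 1) := by
    rw [hs]
    simp
  have hprod_id : finProd s
      = some (emap a ((List.ofFn fun i : Fin k' => Zv (k'+1) (i.1 + 2)).foldl zmul2
          (Zv (k'+1) 1))) := by
    rw [finProd_succ]
    have htail : (List.ofFn fun i : Fin k' => s i.succ)
        = (List.ofFn fun i : Fin k' => Zv (k'+1) (i.1 + 2)).map (emap a) := by
      rw [List.map_ofFn]
      rfl
    rw [htail, hid0, foldl_emap e a heZ hid hcl haZ hea]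
  -- the permuted product
  have h0 : s (σ 0) = emap a (Zv (k'+1) (W 0)) := by
    have h00 : W 0 = (σ 0).1 + 1 := by
      have := hWi (0 : Fin (k'+1))
      rwa [Fin.val_zero] at this
    rw [h00, hs]
  have hprod_σ : finProd (fun i => s (σ i))
      = some (emap a ((List.ofFn fun i : Fin k' => Zv (k'+1) (W (i.1 + 1))).foldl zmul2
          (Zv (k'+1) (W 0)))) := by
    rw [finProd_succ]
    have htail : (List.ofFn fun i : Fin k' => s (σ i.succ))
        = (List.ofFn fun i : Fin k' => Zv (k'+1) (W (i.1 + 1))).map (emap a) := by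
      rw [List.map_ofFn]
      congr 1
      funext i
      have hv : W (i.1 + 1) = (σ i.succ).1 + 1 := by
        have := hWi i.succ
        rwa [Fin.val_succ] at this
      simp only [Function.comp, hv, hs]
    rw [htail, h0, foldl_emap e a heZ hid hcl haZ hea]
  rw [hprod_σ, hprod_id] at heq
  have hmm := Option.some.inj heq
  have hent : mpow a (((List.ofFn fun i : Fin k' => Zv (k'+1) (W (i.1 + 1))).foldl zmul2
          (Zv (k'+1) (W 0))) 0 0)
      = mpow a (((List.ofFn fun i : Fin k' => Zv (k'+1) (i.1 + 2)).foldl zmul2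
          (Zv (k'+1) 1)) 0 0) := congrFun (congrFun hmm 0) 0
  have hentn := mpow_inj e a heZ hid hcl hinv haZ hea hane hent
  -- numeric bounds
  obtain ⟨hu1, -, -, -⟩ := zfold_upper (k'+1) k' (le_refl _)
  have hWk : ∀ n, n < k'+1 → W n ≤ k'+1 := by
    intro n hn
    simp only [hW]
    rw [dif_pos hn]
    have := (σ ⟨n, hn⟩).isLt
    omega
  have hl := (zfold_lower (k'+1) W hWk st.1 tt.1 (Fin.lt_def.mp hlt) tt.isLt k'
      (le_refl _)).2.2 (by have := tt.isLt; omega)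
  have hWst : W tt.1 + 1 ≤ W st.1 := by
    rw [hWi st, hWi tt]
    have := Fin.lt_def.mp hinvr
    omega
  rw [hentn] at hl
  generalize (k'+1)*(2*(k'+1)+3) = X at hu1 hl
  omega

/-- for a bipotent semifield `S`, the semigroups `M_n(S)` and `UT_n(S)`
are strongly permutable for all `n ≥ 2` and `U_n(S)` is strongly permutable for all
`n ≥ 3` if and only if `S` is (isomorphic to) the two-element boolean semifield. -/
theorem stmt_11 {S : Type*} [CommBipotentSemiring S] (hS : IsSemifield S) :
    ((∀ n : ℕ, 2 ≤ n →
        StronglyPermutable (MatSR S n) ∧ StronglyPermutable (UTMat S n)) ∧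
     (∀ n : ℕ, 3 ≤ n → StronglyPermutable (UMat S n)))
      ↔ RingLikeIso S BoolSR := by
  classical
  constructor
  · -- permutability forces S ≅ 𝔹
    intro h
    obtain ⟨e, heZ, hid, hcl, hinv⟩ := hS
    by_cases hall : ∀ x : S, ¬ IsZeroElem x → x = e
    · -- every non-zero element equals `e`; S = {e, z} ≅ 𝔹
      have hez : ∃ z : S, IsZeroElem z := by
        by_contra hz
        push_neg at hz
        apply heZ
        intro x
        have hx : x = e := hall x (hz x)
        subst hx
        exact ⟨s_add_idem x, s_add_idem x, (hid x heZ).1, (hid x heZ).2⟩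
      obtain ⟨z, hz⟩ := hez
      have hzu : ∀ x : S, IsZeroElem x → x = z := by
        intro x hx
        have h1 : x + z = z := (hx z).1
        have h2 : x + z = x := (hz x).2.1
        rw [← h1, h2]
      have heznz : e ≠ z := fun hh => heZ (hh ▸ hz)
      have hnz_e : ∀ x : S, x ≠ z → x = e := by
        intro x hxz
        exact hall x (fun hxx => hxz (hzu x hxx))
      refine ⟨fun x => ((if x = z then false else true : Bool) : BoolSR), ⟨?_, ?_⟩, ?_, ?_⟩
      · intro x y hxy
        dsimp only at hxy
        by_cases hx : x = z <;> by_cases hy : y = z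
        · rw [hx, hy]
        · rw [if_pos hx, if_neg hy] at hxy; exact absurd hxy (by simp)
        · rw [if_neg hx, if_pos hy] at hxy; exact absurd hxy (by simp)
        · rw [hnz_e x hx, hnz_e y hy]
      · intro b
        cases b with
        | false => exact ⟨z, if_pos rfl⟩
        | true => exact ⟨e, if_neg heznz⟩
      · intro x y
        dsimp only
        by_cases hx : x = z
        · rw [hx, (hz y).1, if_pos rfl]
          by_cases hy : y = z
          · rw [if_pos hy]; rfl
          · rw [if_neg hy]; rfl
        · by_cases hy : y = z
          · rw [hy, (hz x).2.1, if_pos rfl, if_neg hx]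
            rfl
          · rw [hnz_e x hx, hnz_e y hy, s_add_idem e, if_neg heznz]
            rfl
      · intro x y
        dsimp only
        by_cases hx : x = z
        · rw [hx, (hz y).2.2.1, if_pos rfl]
          rfl
        · by_cases hy : y = z
          · rw [hy, (hz x).2.2.2, if_pos rfl, if_neg hx]
            rfl
          · rw [hnz_e x hx, hnz_e y hy, (hid e heZ).1, if_neg heznz]
            rfl
    · -- there is a non-zero element ≠ e, contradicting permutability of M₂(S)
      push_neg at hall
      obtain ⟨b, hbZ, hbe⟩ := hall
      exfalso
      obtain ⟨kk, hkk, hKP⟩ := (h.1 2 (le_refl 2)).1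
      rcases BipotentSemiring.bipotent e b with hb | hb
      · -- b ≤ e : use the inverse of b
        obtain ⟨b', hb'Z, hbb', hb'b⟩ := hinv b hbZ
        have hsleb : sle b e := by
          show b + e = e
          rw [s_add_comm]; exact hb
        have h1 : sle (b' * b) (b' * e) := sle_mul_left hsleb b'
        rw [hb'b, (hid b' hb'Z).2] at h1
        have hb'ne : b' ≠ e := by
          intro hh
          subst hh
          rw [(hid b hbZ).2] at hbb'
          exact hbe hbb'
        exact matsr2_not_kperm e b' heZ hid hcl hinv hb'Z h1 hb'ne kk hkk hKP
      · -- e ≤ b : use b itself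
        exact matsr2_not_kperm e b heZ hid hcl hinv hbZ hb hbe kk hkk hKP
  · -- 𝔹 is finite, so everything is strongly permutable
    intro hiso
    obtain ⟨f, hbij, -, -⟩ := hiso
    haveI : Finite BoolSR := inferInstanceAs (Finite Bool)
    haveI hFS : Finite S := Finite.of_equiv BoolSR (Equiv.ofBijective f hbij).symm
    haveI := Fintype.ofFinite S
    refine ⟨fun n _ => ⟨?_, ?_⟩, fun n _ => ?_⟩
    · haveI : Finite (MatSR S n) := inferInstanceAs (Finite (Fin n → Fin n → S))
      exact stronglyPermutable_of_finite _
    · haveI : Finite (Adj0 S) := Finite.of_equiv _ (adj0Equiv S).symm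
      haveI : Finite (MatSR (Adj0 S) n) :=
        inferInstanceAs (Finite (Fin n → Fin n → Adj0 S))
      haveI : Finite (UTMat S n) :=
        inferInstanceAs (Finite {A : MatSR (Adj0 S) n // IsUT A})
      exact stronglyPermutable_of_finite _
    · haveI : Finite (Adj01 S) := Finite.of_equiv _ (adj01Equiv S).symm
      haveI : Finite (MatSR (Adj01 S) n) :=
        inferInstanceAs (Finite (Fin n → Fin n → Adj01 S))
      haveI : Finite (UMat S n) :=
        inferInstanceAs (Finite {A : MatSR (Adj01 S) n // IsU A})
      exact stronglyPermutable_of_finite _
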